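/- Let L₀ δ(y) = −δ''(y) − (2/y − y/2)·δ'(y) + (2/y²)·δ(y), p₁(y) = √(2+y²)/(√2·y) and p₂(y) = (2+y²)^{5/2}/(3√2·y·(4+y²)). Then L₀(1/p₁) = 1/p₂ on (0,∞). -/

import Mathlib

noncomputable def p₁ (y : ℝ) : ℝ := Real.sqrt (2 + y^2) / (Real.sqrt 2 * y)

noncomputable def p₂ (y : ℝ) : ℝ :=
  (2 + y^2) ^ ((5:ℝ)/2) / (3 * Real.sqrt 2 * y * (4 + y^2))

lemma sq_pos (t : ℝ) : (0:ℝ) < 2 + t^2 := by positivity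

lemma sqrt_pos' (t : ℝ) : (0:ℝ) < Real.sqrt (2 + t^2) :=
  Real.sqrt_pos.mpr (sq_pos t)

lemma inv_p1_eq : (fun t => 1 / p₁ t) =
    fun t : ℝ => Real.sqrt 2 * t / Real.sqrt (2 + t^2) := by
  funext t
  simp only [p₁, one_div_div]

lemma hasDerivAt_sqrt_fun (t : ℝ) :
    HasDerivAt (fun t : ℝ => Real.sqrt (2 + t^2)) (t / Real.sqrt (2 + t^2)) t := by
  have h1 : HasDerivAt (fun t : ℝ => 2 + t^2) (2*t) t := by
    simpa using ((hasDerivAt_pow 2 t).const_add 2)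
  have := h1.sqrt (ne_of_gt (sq_pos t))
  convert this using 1
  have hs := (sqrt_pos' t).ne'
  field_simp

lemma deriv1 : deriv (fun t => 1 / p₁ t) =
    fun t : ℝ => 2 * Real.sqrt 2 / ((2 + t^2) * Real.sqrt (2 + t^2)) := by
  rw [inv_p1_eq]
  funext t
  have hu : HasDerivAt (fun t : ℝ => Real.sqrt 2 * t) (Real.sqrt 2) t := by
    simpa using (hasDerivAt_id t).const_mul (Real.sqrt 2)
  have hv := hasDerivAt_sqrt_fun t
  have hd := hu.div hv (sqrt_pos' t).ne'
  rw [show deriv (fun t : ℝ => Real.sqrt 2 * t / Real.sqrt (2 + t^2)) t = _ from hd.deriv]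
  have hs : Real.sqrt (2 + t^2) ^ 2 = 2 + t^2 := Real.sq_sqrt (sq_pos t).le
  have hsne := (sqrt_pos' t).ne'
  field_simp
  linear_combination t^2 * hs

lemma deriv2 (y : ℝ) :
    deriv (deriv (fun t => 1 / p₁ t)) y =
      -6 * Real.sqrt 2 * y / ((2 + y^2)^2 * Real.sqrt (2 + y^2)) := by
  rw [deriv1]
  have hw : HasDerivAt (fun t : ℝ => (2 + t^2) * Real.sqrt (2 + t^2))
      (3 * y * Real.sqrt (2 + y^2)) y := by
    have h1 : HasDerivAt (fun t : ℝ => 2 + t^2) (2*y) y := by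
      simpa using ((hasDerivAt_pow 2 y).const_add 2)
    have h : HasDerivAt (fun t : ℝ => (2 + t^2) * Real.sqrt (2 + t^2)) _ y :=
      h1.mul (hasDerivAt_sqrt_fun y)
    convert h using 1
    have hsne := (sqrt_pos' y).ne'
    have hs : Real.sqrt (2 + y^2) ^ 2 = 2 + y^2 := Real.sq_sqrt (sq_pos y).le
    field_simp
    linear_combination y * hs
  have hd := (hasDerivAt_const y (2 * Real.sqrt 2)).div hw
    (by positivity : ((2 + y^2) * Real.sqrt (2 + y^2)) ≠ 0)
  rw [show deriv (fun t : ℝ => 2 * Real.sqrt 2 / ((2 + t^2) * Real.sqrt (2 + t^2))) y = _ from hd.deriv]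
  have hs : Real.sqrt (2 + y^2) ^ 2 = 2 + y^2 := Real.sq_sqrt (sq_pos y).le
  have hsne := (sqrt_pos' y).ne'
  field_simp
  nlinarith [hs, sqrt_pos' y]

theorem L0_inv_p1 (y : ℝ) (hy : 0 < y) :
    -(deriv (deriv (fun t => 1 / p₁ t)) y)
      - (2/y - y/2) * deriv (fun t => 1 / p₁ t) y
      + (2/y^2) * (1 / p₁ y) = 1 / p₂ y := by
  have h1 : (1 : ℝ) / p₁ y = Real.sqrt 2 * y / Real.sqrt (2 + y^2) := by
    rw [show (1:ℝ) / p₁ y = (fun t => 1 / p₁ t) y from rfl, inv_p1_eq]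
  rw [deriv2, deriv1, h1]
  have hpos := sq_pos y
  have h5 : (2 + y^2) ^ ((5:ℝ)/2) = (2 + y^2)^2 * Real.sqrt (2 + y^2) := by
    rw [show ((5:ℝ)/2) = ((2:ℕ):ℝ) + 1/2 by norm_num, Real.rpow_add hpos,
      Real.rpow_natCast, ← Real.sqrt_eq_rpow]
  rw [p₂, h5]
  have hs : Real.sqrt (2 + y^2) ^ 2 = 2 + y^2 := Real.sq_sqrt hpos.le
  have hsne := (sqrt_pos' y).ne'
  have h2 : Real.sqrt 2 ^ 2 = 2 := Real.sq_sqrt (by norm_num)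
  have h2ne : Real.sqrt 2 ≠ 0 := by positivity
  field_simp
  nlinarith [hs, h2, sq_nonneg y, mul_pos (sqrt_pos' y) hy]
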